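/- Suppose the discount function satisfies δ(i)δ(j) ≤ δ(i+j) for all i,j ∈ ℕ. If S* := ∩_{S∈ℰ} S is an equilibrium, then S* is optimal, i.e. V(x,S*) ≥ V(x,S) for every S ∈ ℰ and every x ∈ 𝕏. -/

import Mathlib

open MeasureTheory ProbabilityTheory Set Filter Topology
open scoped ENNReal ENat

noncomputable section

/-- The σ-algebra generated by the first `n+1` coordinates of the path space:
the natural filtration of the coordinate process at time `n`. -/
def pathSigma (𝕏 : Type*) [m : MeasurableSpace 𝕏] (n : ℕ) : MeasurableSpace (ℕ → 𝕏) :=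
  ⨆ i ∈ Finset.range (n + 1), MeasurableSpace.comap (fun ω : ℕ → 𝕏 => ω i) m

/-- `Pr` is the family of laws of the time-homogeneous Markov chain with one-step
transition kernel `Q`: under `Pr x` the chain starts at `x`, and the Markov property
`Pr^x(X_{n+1} ∈ A | 𝓕_n) = Q(X_n, A)` holds. -/
structure IsMarkovChainLaw {𝕏 : Type*} [MeasurableSpace 𝕏]
    (Pr : Kernel 𝕏 (ℕ → 𝕏)) (Q : Kernel 𝕏 𝕏) : Prop where
  start : ∀ x : 𝕏, Pr x {ω | ω 0 = x} = 1
  markov : ∀ (x : 𝕏) (n : ℕ) (B : Set (ℕ → 𝕏)), MeasurableSet[pathSigma 𝕏 n] B →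
    ∀ A : Set 𝕏, MeasurableSet A →
      Pr x (B ∩ {ω | ω (n + 1) ∈ A}) = ∫⁻ ω in B, Q (ω n) A ∂(Pr x)

/-- The first hitting time `ρ(x,S) = inf {t ≥ 1 : X_t ∈ S}` along the path `ω`
(equal to `⊤` if `S` is never reached at a time `≥ 1`). -/
def hitTime {𝕏 : Type*} (S : Set 𝕏) (ω : ℕ → 𝕏) : ℕ∞ :=
  sInf {n : ℕ∞ | ∃ t : ℕ, n = (t : ℕ∞) ∧ 1 ≤ t ∧ ω t ∈ S}

/-- The discounted payoff `δ(ρ(x,S)) f(X_{ρ(x,S)})` collected along the path `ω`,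
with the convention that it vanishes when `S` is never hit. -/
def stopPayoff {𝕏 : Type*} (δ : ℕ → ℝ) (f : 𝕏 → ℝ) (S : Set 𝕏) (ω : ℕ → 𝕏) : ℝ :=
  if hitTime S ω = ⊤ then 0
  else δ (hitTime S ω).toNat * f (ω (hitTime S ω).toNat)

/-- The objective value `J(x, ρ(x,S)) = 𝔼^x[δ(ρ(x,S)) f(X_{ρ(x,S)})]`. -/
def valJ {𝕏 : Type*} [MeasurableSpace 𝕏] (Pr : Kernel 𝕏 (ℕ → 𝕏)) (δ : ℕ → ℝ) (f : 𝕏 → ℝ)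
    (S : Set 𝕏) (x : 𝕏) : ℝ :=
  ∫ ω, stopPayoff δ f S ω ∂(Pr x)

/-- The operator `Θ(S) = {x ∈ 𝕏 : f(x) ≥ J(x, ρ(x,S))}`. -/
def Θ {𝕏 : Type*} [MeasurableSpace 𝕏] (Pr : Kernel 𝕏 (ℕ → 𝕏)) (δ : ℕ → ℝ) (f : 𝕏 → ℝ)
    (S : Set 𝕏) : Set 𝕏 :=
  {x | valJ Pr δ f S x ≤ f x}

/-- A Borel set `S ⊆ 𝕏` is an equilibrium if `Θ(S) = S`. -/
def IsEquilibrium {𝕏 : Type*} [MeasurableSpace 𝕏] (Pr : Kernel 𝕏 (ℕ → 𝕏)) (δ : ℕ → ℝ)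
    (f : 𝕏 → ℝ) (S : Set 𝕏) : Prop :=
  MeasurableSet S ∧ Θ Pr δ f S = S

/-- The value `V(x,S) = max (f x) (J(x, ρ(x,S)))` associated with an equilibrium `S`. -/
def valV {𝕏 : Type*} [MeasurableSpace 𝕏] (Pr : Kernel 𝕏 (ℕ → 𝕏)) (δ : ℕ → ℝ) (f : 𝕏 → ℝ)
    (S : Set 𝕏) (x : 𝕏) : ℝ :=
  max (f x) (valJ Pr δ f S x)

section AuxMarkov

variable {𝕏 : Type*} [MeasurableSpace 𝕏]

lemma pathSigma_le (n : ℕ) : pathSigma 𝕏 n ≤ MeasurableSpace.pi := by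
  refine iSup_le fun i => iSup_le fun _ => ?_
  exact (measurable_pi_apply i).comap_le

lemma pathSigma_mono {m n : ℕ} (h : m ≤ n) : pathSigma 𝕏 m ≤ pathSigma 𝕏 n := by
  refine iSup_le fun i => iSup_le fun hi => ?_
  refine le_iSup_of_le i (le_iSup_of_le ?_ le_rfl)
  simp only [Finset.mem_range] at hi ⊢; omega

lemma measurable_eval_pathSigma {i n : ℕ} (h : i ≤ n) :
    Measurable[pathSigma 𝕏 n] (fun ω : ℕ → 𝕏 => ω i) := by
  rw [measurable_iff_comap_le]
  refine le_iSup_of_le i (le_iSup_of_le ?_ le_rfl)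
  simp only [Finset.mem_range]; omega

lemma hitTime_eq_top_iff {S : Set 𝕏} {ω : ℕ → 𝕏} :
    hitTime S ω = ⊤ ↔ ∀ t : ℕ, 1 ≤ t → ω t ∉ S := by
  constructor
  · intro h t ht hmem
    have : hitTime S ω ≤ (t : ℕ∞) := sInf_le ⟨t, rfl, ht, hmem⟩
    rw [h] at this
    exact (ENat.coe_lt_top t).not_ge this
  · intro h
    have : {n : ℕ∞ | ∃ t : ℕ, n = (t : ℕ∞) ∧ 1 ≤ t ∧ ω t ∈ S} = ∅ := by
      ext n; simp only [mem_setOf_eq, mem_empty_iff_false, iff_false]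
      rintro ⟨t, rfl, ht, hmem⟩; exact h t ht hmem
    rw [hitTime, this, sInf_empty]

lemma hitTime_eq_coe_iff {S : Set 𝕏} {ω : ℕ → 𝕏} {t : ℕ} :
    hitTime S ω = (t : ℕ∞) ↔ 1 ≤ t ∧ ω t ∈ S ∧ ∀ s : ℕ, 1 ≤ s → s < t → ω s ∉ S := by
  constructor
  · intro h
    have hne : {n : ℕ∞ | ∃ u : ℕ, n = (u : ℕ∞) ∧ 1 ≤ u ∧ ω u ∈ S}.Nonempty := by
      by_contra hcon
      rw [not_nonempty_iff_eq_empty] at hcon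
      rw [hitTime, hcon, sInf_empty] at h
      exact (ENat.coe_lt_top t).ne' h
    have hmem := csInf_mem hne
    rw [hitTime] at h
    rw [h] at hmem
    obtain ⟨u, hu, h1u, hmemu⟩ := hmem
    have htu : t = u := by exact_mod_cast hu
    subst htu
    refine ⟨h1u, hmemu, fun s h1s hst hmem => ?_⟩
    have : sInf {n : ℕ∞ | ∃ u : ℕ, n = (u : ℕ∞) ∧ 1 ≤ u ∧ ω u ∈ S} ≤ (s : ℕ∞) :=
      sInf_le ⟨s, rfl, h1s, hmem⟩
    rw [h] at this
    exact absurd (by exact_mod_cast this) (not_le.mpr hst)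
  · rintro ⟨h1, h2, h3⟩
    refine le_antisymm (sInf_le ⟨t, rfl, h1, h2⟩) (le_sInf ?_)
    rintro n ⟨s, rfl, h1s, hmem⟩
    by_contra hcon
    push_neg at hcon
    have hst : s < t := by exact_mod_cast hcon
    exact h3 s h1s hst hmem

lemma hitTime_shift {S : Set 𝕏} {ω : ℕ → 𝕏} {t : ℕ} (ht : 1 ≤ t)
    (hno : ∀ s : ℕ, 1 ≤ s → s ≤ t → ω s ∉ S) :
    hitTime S ω = (t : ℕ∞) + hitTime S (fun s => ω (t + s)) := by
  rcases eq_top_or_lt_top (hitTime S (fun s => ω (t + s))) with htop | hlt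
  · rw [htop, add_top]
    rw [hitTime_eq_top_iff] at htop
    rw [hitTime_eq_top_iff]
    intro s h1s hmem
    rcases le_or_gt s t with hst | hst
    · exact hno s h1s hst hmem
    · have h1 : 1 ≤ s - t := by omega
      have h2 : t + (s - t) = s := by omega
      exact htop (s - t) h1 (by rw [h2]; exact hmem)
  · obtain ⟨u, hu⟩ : ∃ u : ℕ, hitTime S (fun s => ω (t + s)) = (u : ℕ∞) :=
      ⟨(hitTime S (fun s => ω (t + s))).toNat, (ENat.coe_toNat hlt.ne).symm⟩
    rw [hu, show ((t:ℕ∞) + (u:ℕ∞)) = ((t+u : ℕ) : ℕ∞) by push_cast; ring]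
    rw [hitTime_eq_coe_iff] at hu
    obtain ⟨h1u, hmemu, hminu⟩ := hu
    rw [hitTime_eq_coe_iff]
    refine ⟨by omega, hmemu, fun s h1s hst hmem => ?_⟩
    rcases le_or_gt s t with hst' | hst'
    · exact hno s h1s hst' hmem
    · have h1 : 1 ≤ s - t := by omega
      have h2 : s - t < u := by omega
      have h3 : t + (s - t) = s := by omega
      exact hminu (s - t) h1 h2 (by rw [h3]; exact hmem)

def payoffL (δ : ℕ → ℝ) (f : 𝕏 → ℝ) (S : Set 𝕏) (ω : ℕ → 𝕏) : ℝ≥0∞ :=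
  ∑' t : ℕ, ({ω' : ℕ → 𝕏 | hitTime S ω' = (t : ℕ∞)}.indicator
    (fun ω' => ENNReal.ofReal (δ t * f (ω' t)))) ω

omit [MeasurableSpace 𝕏] in
lemma payoffL_eq (δ : ℕ → ℝ) (f : 𝕏 → ℝ) (S : Set 𝕏) (ω : ℕ → 𝕏) :
    payoffL δ f S ω = ENNReal.ofReal (stopPayoff δ f S ω) := by
  rcases eq_top_or_lt_top (hitTime S ω) with htop | hlt
  · have : stopPayoff δ f S ω = 0 := by rw [stopPayoff, if_pos htop]
    rw [this, ENNReal.ofReal_zero, payoffL]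
    rw [ENNReal.tsum_eq_zero]
    intro t
    rw [indicator_apply_eq_zero]
    intro hmem
    exact absurd (hmem.symm.trans htop) (by simp)
  · obtain ⟨u, hu⟩ : ∃ u : ℕ, hitTime S ω = (u : ℕ∞) :=
      ⟨(hitTime S ω).toNat, (ENat.coe_toNat hlt.ne).symm⟩
    have hne : hitTime S ω ≠ ⊤ := hlt.ne
    have htn : (hitTime S ω).toNat = u := by rw [hu]; simp
    have : stopPayoff δ f S ω = δ u * f (ω u) := by
      rw [stopPayoff, if_neg hne, htn]
    rw [this, payoffL]
    rw [tsum_eq_single u]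
    · rw [indicator_of_mem (by exact hu)]
    · intro t hne'
      rw [indicator_apply_eq_zero]
      intro hmem
      exact absurd (by exact_mod_cast hmem.symm.trans hu : t = u) hne'

omit [MeasurableSpace 𝕏] in
lemma stopPayoff_nonneg {δ : ℕ → ℝ} {f : 𝕏 → ℝ} (hδ : ∀ k, 0 ≤ δ k) (hf : ∀ y, 0 ≤ f y)
    (S : Set 𝕏) (ω : ℕ → 𝕏) : 0 ≤ stopPayoff δ f S ω := by
  rw [stopPayoff]; split
  · exact le_refl 0
  · exact mul_nonneg (hδ _) (hf _)

omit [MeasurableSpace 𝕏] in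
lemma stopPayoff_le {δ : ℕ → ℝ} {f : 𝕏 → ℝ} {C : ℝ} (hδ : ∀ k, δ k ≤ 1) (hδ0 : ∀ k, 0 ≤ δ k)
    (hf : ∀ y, 0 ≤ f y) (hfC : ∀ y, f y ≤ C) (hC : 0 ≤ C)
    (S : Set 𝕏) (ω : ℕ → 𝕏) : stopPayoff δ f S ω ≤ C := by
  rw [stopPayoff]; split
  · exact hC
  · calc δ _ * f _ ≤ 1 * f _ := mul_le_mul_of_nonneg_right (hδ _) (hf _)
    _ = f _ := one_mul _
    _ ≤ C := hfC _

lemma measurableSet_hitTime_eq {S : Set 𝕏} (hS : MeasurableSet S) (t : ℕ) :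
    MeasurableSet[pathSigma 𝕏 t] {ω : ℕ → 𝕏 | hitTime S ω = (t : ℕ∞)} := by
  by_cases ht : 1 ≤ t
  · have : {ω : ℕ → 𝕏 | hitTime S ω = (t : ℕ∞)} =
        {ω : ℕ → 𝕏 | ω t ∈ S} ∩ ⋂ (s : ℕ) (_ : 1 ≤ s) (_ : s < t), {ω : ℕ → 𝕏 | ω s ∈ Sᶜ} := by
      ext ω
      simp only [hitTime_eq_coe_iff, mem_setOf_eq, mem_inter_iff, mem_iInter, mem_compl_iff]
      tauto
    rw [this]
    refine @MeasurableSet.inter _ (pathSigma 𝕏 t) _ _ (measurable_eval_pathSigma le_rfl hS) ?_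
    refine @MeasurableSet.iInter _ _ (pathSigma 𝕏 t) _ _ fun s => ?_
    refine @MeasurableSet.iInter _ _ (pathSigma 𝕏 t) _ _ fun _ => ?_
    refine @MeasurableSet.iInter _ _ (pathSigma 𝕏 t) _ _ fun hst => ?_
    exact measurable_eval_pathSigma (le_of_lt hst) hS.compl
  · have : {ω : ℕ → 𝕏 | hitTime S ω = (t : ℕ∞)} = ∅ := by
      ext ω
      simp only [hitTime_eq_coe_iff, mem_setOf_eq, mem_empty_iff_false, iff_false]
      intro h; exact ht h.1
    rw [this]; exact @MeasurableSet.empty _ (pathSigma 𝕏 t)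

lemma measurableSet_hitTime_eq' {S : Set 𝕏} (hS : MeasurableSet S) (t : ℕ) :
    MeasurableSet {ω : ℕ → 𝕏 | hitTime S ω = (t : ℕ∞)} :=
  pathSigma_le t _ (measurableSet_hitTime_eq hS t)

lemma measurable_payoffL {δ : ℕ → ℝ} {f : 𝕏 → ℝ} (hf : Measurable f) {S : Set 𝕏}
    (hS : MeasurableSet S) : Measurable (payoffL δ f S) := by
  refine Measurable.ennreal_tsum fun t => ?_
  exact Measurable.indicator
    (ENNReal.measurable_ofReal.comp ((hf.comp (measurable_pi_apply t)).const_mul _))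
    (measurableSet_hitTime_eq' hS t)

lemma measurable_stopPayoff {δ : ℕ → ℝ} {f : 𝕏 → ℝ} (hδ : ∀ k, 0 ≤ δ k) (hf_nonneg : ∀ y, 0 ≤ f y)
    (hf : Measurable f) {S : Set 𝕏} (hS : MeasurableSet S) :
    Measurable (stopPayoff δ f S) := by
  have : stopPayoff δ f S = fun ω => (payoffL δ f S ω).toReal := by
    funext ω
    rw [payoffL_eq, ENNReal.toReal_ofReal (stopPayoff_nonneg hδ hf_nonneg S ω)]
  rw [this]
  exact ENNReal.measurable_toReal.comp (measurable_payoffL hf hS)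

lemma lintegral_payoffL_le {δ : ℕ → ℝ} {f : 𝕏 → ℝ} {C : ℝ} (hδ : ∀ k, δ k ≤ 1)
    (hδ0 : ∀ k, 0 ≤ δ k) (hf : ∀ y, 0 ≤ f y) (hfC : ∀ y, f y ≤ C) (hC : 0 ≤ C)
    (S : Set 𝕏) (μ : Measure (ℕ → 𝕏)) [IsProbabilityMeasure μ] :
    ∫⁻ ω, payoffL δ f S ω ∂μ ≤ ENNReal.ofReal C := by
  calc ∫⁻ ω, payoffL δ f S ω ∂μ ≤ ∫⁻ _, ENNReal.ofReal C ∂μ := by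
        refine lintegral_mono fun ω => ?_
        rw [payoffL_eq]
        exact ENNReal.ofReal_le_ofReal (stopPayoff_le hδ hδ0 hf hfC hC S ω)
    _ = ENNReal.ofReal C := by rw [lintegral_const, measure_univ, mul_one]

lemma valJ_eq_toReal {Pr : Kernel 𝕏 (ℕ → 𝕏)} [IsMarkovKernel Pr] {δ : ℕ → ℝ} {f : 𝕏 → ℝ}
    (hδ0 : ∀ k, 0 ≤ δ k) (hf_nonneg : ∀ y, 0 ≤ f y) (hf : Measurable f)
    {S : Set 𝕏} (hS : MeasurableSet S) (y : 𝕏) :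
    valJ Pr δ f S y = (∫⁻ ω, payoffL δ f S ω ∂(Pr y)).toReal := by
  rw [valJ, integral_eq_lintegral_of_nonneg_ae
    (Filter.Eventually.of_forall fun ω => stopPayoff_nonneg hδ0 hf_nonneg S ω)
    (measurable_stopPayoff hδ0 hf_nonneg hf hS).aestronglyMeasurable]
  congr 1
  exact lintegral_congr fun ω => (payoffL_eq δ f S ω).symm

lemma ofReal_valJ {Pr : Kernel 𝕏 (ℕ → 𝕏)} [IsMarkovKernel Pr] {δ : ℕ → ℝ} {f : 𝕏 → ℝ} {C : ℝ}
    (hδ : ∀ k, δ k ≤ 1) (hδ0 : ∀ k, 0 ≤ δ k) (hf_nonneg : ∀ y, 0 ≤ f y) (hfC : ∀ y, f y ≤ C)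
    (hC : 0 ≤ C) (hf : Measurable f) {S : Set 𝕏} (hS : MeasurableSet S) (y : 𝕏) :
    ENNReal.ofReal (valJ Pr δ f S y) = ∫⁻ ω, payoffL δ f S ω ∂(Pr y) := by
  rw [valJ_eq_toReal hδ0 hf_nonneg hf hS, ENNReal.ofReal_toReal]
  exact ne_top_of_le_ne_top ENNReal.ofReal_ne_top (lintegral_payoffL_le hδ hδ0 hf_nonneg hfC hC S _)

variable {Q : Kernel 𝕏 𝕏} {Pr : Kernel 𝕏 (ℕ → 𝕏)} [IsMarkovKernel Pr] [IsMarkovKernel Q]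

lemma measurable_lintegral_Q {φ : 𝕏 → ℝ≥0∞} (hφ : Measurable φ) (m : ℕ) :
    Measurable (fun ω : ℕ → 𝕏 => ∫⁻ z, φ z ∂(Q (ω m))) :=
  (Measurable.lintegral_kernel hφ).comp (measurable_pi_apply m)

lemma measurable_comp_eval {φ : 𝕏 → ℝ≥0∞} (hφ : Measurable φ) (k : ℕ) :
    Measurable fun ω : ℕ → 𝕏 => φ (ω k) := hφ.comp (measurable_pi_apply k)

lemma markov_fun (hchain : IsMarkovChainLaw Pr Q) (m : ℕ) {B : Set (ℕ → 𝕏)}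
    (hB : MeasurableSet[pathSigma 𝕏 m] B) {φ : 𝕏 → ℝ≥0∞} (hφ : Measurable φ) (x : 𝕏) :
    ∫⁻ ω in B, φ (ω (m+1)) ∂(Pr x) = ∫⁻ ω in B, ∫⁻ z, φ z ∂(Q (ω m)) ∂(Pr x) := by
  have hB' : MeasurableSet B := pathSigma_le m _ hB
  refine Measurable.ennreal_induction
    (motive := fun ψ => ∫⁻ ω in B, ψ (ω (m+1)) ∂(Pr x) = ∫⁻ ω in B, ∫⁻ z, ψ z ∂(Q (ω m)) ∂(Pr x))
    ?_ ?_ ?_ hφ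
  · intro c s hs
    have hms : MeasurableSet {ω : ℕ → 𝕏 | ω (m+1) ∈ s} := measurable_pi_apply (m+1) hs
    have hQs : Measurable fun ω : ℕ → 𝕏 => Q (ω m) s :=
      (Q.measurable_coe hs).comp (measurable_pi_apply m)
    have heq : (fun ω : ℕ → 𝕏 => s.indicator (fun _ => c) (ω (m+1))) =
        {ω : ℕ → 𝕏 | ω (m+1) ∈ s}.indicator (fun _ => c) := by
      funext ω; by_cases h : ω (m+1) ∈ s <;>
        simp [Set.indicator_apply, h, Set.mem_setOf_eq]
    calc ∫⁻ ω in B, s.indicator (fun _ => c) (ω (m+1)) ∂(Pr x)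
        = ∫⁻ ω in B, {ω : ℕ → 𝕏 | ω (m+1) ∈ s}.indicator (fun _ => c) ω ∂(Pr x) := by
          rw [heq]
      _ = c * (Pr x) (B ∩ {ω : ℕ → 𝕏 | ω (m+1) ∈ s}) := by
          rw [lintegral_indicator hms, Measure.restrict_restrict hms, setLIntegral_const,
            inter_comm]
      _ = c * ∫⁻ ω in B, Q (ω m) s ∂(Pr x) := by rw [hchain.markov x m B hB s hs]
      _ = ∫⁻ ω in B, c * Q (ω m) s ∂(Pr x) := (lintegral_const_mul c hQs).symm
      _ = ∫⁻ ω in B, ∫⁻ z, s.indicator (fun _ => c) z ∂(Q (ω m)) ∂(Pr x) := by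
          refine lintegral_congr fun ω => ?_
          rw [lintegral_indicator_const hs]
  · intro f g _hdisj hf hg ihf ihg
    try simp only [] at ihf ihg ⊢
    simp only [Pi.add_apply]
    rw [lintegral_add_left (measurable_comp_eval hf (m+1)), ihf, ihg,
      ← lintegral_add_left (measurable_lintegral_Q hf m)]
    refine lintegral_congr fun ω => ?_
    rw [← lintegral_add_left hf]
  · intro f hf hmono ih
    try simp only [] at ih ⊢
    rw [lintegral_iSup (fun n => measurable_comp_eval (hf n) (m+1))
      (fun i j hij ω => hmono hij _)]
    simp only [ih]
    rw [← lintegral_iSup (fun n => measurable_lintegral_Q (hf n) m)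
      (fun i j hij ω => lintegral_mono fun z => hmono hij z)]
    refine lintegral_congr fun ω => ?_
    rw [lintegral_iSup hf hmono]

lemma markov_fun_mul (hchain : IsMarkovChainLaw Pr Q) (m : ℕ) {Ψ : (ℕ → 𝕏) → ℝ≥0∞}
    (hΨ : Measurable[pathSigma 𝕏 m] Ψ) {φ : 𝕏 → ℝ≥0∞} (hφ : Measurable φ) (x : 𝕏) :
    ∫⁻ ω, Ψ ω * φ (ω (m+1)) ∂(Pr x) = ∫⁻ ω, Ψ ω * ∫⁻ z, φ z ∂(Q (ω m)) ∂(Pr x) := by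
  have hφe : Measurable fun ω : ℕ → 𝕏 => φ (ω (m+1)) := measurable_comp_eval hφ (m+1)
  refine @Measurable.ennreal_induction _ (pathSigma 𝕏 m)
    (fun Ψ => ∫⁻ ω, Ψ ω * φ (ω (m+1)) ∂(Pr x) = ∫⁻ ω, Ψ ω * ∫⁻ z, φ z ∂(Q (ω m)) ∂(Pr x))
    ?_ ?_ ?_ _ hΨ
  · intro c s hs
    have hs' : MeasurableSet s := pathSigma_le m _ hs
    have heq : ∀ g : (ℕ → 𝕏) → ℝ≥0∞, ∀ ω, s.indicator (fun _ => c) ω * g ω =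
        s.indicator (fun ω' => c * g ω') ω := by
      intro g ω; by_cases h : ω ∈ s <;> simp [Set.indicator_apply, h]
    calc ∫⁻ ω, s.indicator (fun _ => c) ω * φ (ω (m+1)) ∂(Pr x)
        = ∫⁻ ω, s.indicator (fun ω' => c * φ (ω' (m+1))) ω ∂(Pr x) := by
          exact lintegral_congr fun ω => heq (fun ω' => φ (ω' (m+1))) ω
      _ = c * ∫⁻ ω in s, φ (ω (m+1)) ∂(Pr x) := by
          rw [lintegral_indicator hs', lintegral_const_mul c hφe]
      _ = c * ∫⁻ ω in s, ∫⁻ z, φ z ∂(Q (ω m)) ∂(Pr x) := by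
          rw [markov_fun hchain m hs hφ x]
      _ = ∫⁻ ω, s.indicator (fun ω' => c * ∫⁻ z, φ z ∂(Q (ω' m))) ω ∂(Pr x) := by
          rw [lintegral_indicator hs', lintegral_const_mul c (measurable_lintegral_Q hφ m)]
      _ = ∫⁻ ω, s.indicator (fun _ => c) ω * ∫⁻ z, φ z ∂(Q (ω m)) ∂(Pr x) := by
          exact lintegral_congr fun ω => (heq (fun ω' => ∫⁻ z, φ z ∂(Q (ω' m))) ω).symm
  · intro f g _hdisj hf hg ihf ihg
    have hf' : Measurable f := hf.mono (pathSigma_le m) le_rfl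
    have hg' : Measurable g := hg.mono (pathSigma_le m) le_rfl
    try simp only [] at ihf ihg ⊢
    simp only [Pi.add_apply, add_mul]
    rw [lintegral_add_left (f := fun ω => f ω * φ (ω (m+1))) (hf'.mul hφe), ihf, ihg,
      ← lintegral_add_left (f := fun ω => f ω * ∫⁻ z, φ z ∂(Q (ω m))) (hf'.mul (measurable_lintegral_Q hφ m))]
  · intro f hf hmono ih
    have hf' : ∀ n, Measurable (f n) := fun n => (hf n).mono (pathSigma_le m) le_rfl
    try simp only [] at ih ⊢
    simp only [ENNReal.iSup_mul]
    rw [lintegral_iSup (f := fun n ω => f n ω * φ (ω (m+1))) (fun n => (hf' n).mul hφe)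
      (fun i j hij ω => mul_le_mul_left (hmono hij _) _)]
    simp only [ih]
    rw [← lintegral_iSup (f := fun n ω => f n ω * ∫⁻ z, φ z ∂(Q (ω m))) (fun n => (hf' n).mul (measurable_lintegral_Q hφ m))
      (fun i j hij ω => mul_le_mul_left (hmono hij _) _)]

def succFn (Q : Kernel 𝕏 𝕏) (n : ℕ) (h : Fin (n+2) → 𝕏 → ℝ≥0∞) : Fin (n+1) → 𝕏 → ℝ≥0∞ :=
  fun i y => h i.castSucc y *
    (if i = Fin.last n then ∫⁻ z, h (Fin.last (n+1)) z ∂(Q y) else 1)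

lemma measurable_succFn {n : ℕ} {h : Fin (n+2) → 𝕏 → ℝ≥0∞} (hh : ∀ i, Measurable (h i)) :
    ∀ i, Measurable (succFn Q n h i) := by
  intro i
  refine Measurable.mul (hh _) ?_
  by_cases hi : i = Fin.last n
  · simp only [hi, if_pos rfl]
    exact Measurable.lintegral_kernel (hh _)
  · simp only [if_neg hi]
    exact measurable_const

lemma prod_succFn {n : ℕ} {h : Fin (n+2) → 𝕏 → ℝ≥0∞} (w : Fin (n+1) → 𝕏) :
    ∏ i : Fin (n+1), succFn Q n h i (w i)
      = (∏ i : Fin (n+1), h i.castSucc (w i)) *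
          ∫⁻ z, h (Fin.last (n+1)) z ∂(Q (w (Fin.last n))) := by
  simp only [succFn]
  rw [Finset.prod_mul_distrib]
  congr 1
  rw [Finset.prod_ite_eq' Finset.univ (Fin.last n)
    (fun i => ∫⁻ z, h (Fin.last (n+1)) z ∂(Q (w i)))]
  simp

lemma finMarkov_step (hchain : IsMarkovChainLaw Pr Q) (n t : ℕ) {Ψ : (ℕ → 𝕏) → ℝ≥0∞}
    (hΨ : Measurable[pathSigma 𝕏 (t+n)] Ψ) (h : Fin (n+2) → 𝕏 → ℝ≥0∞)
    (hh : ∀ i, Measurable (h i)) (x : 𝕏) :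
    ∫⁻ ω, Ψ ω * ∏ i : Fin (n+2), h i (ω (t + ↑i)) ∂(Pr x)
      = ∫⁻ ω, Ψ ω * ∏ i : Fin (n+1), succFn Q n h i (ω (t + ↑i)) ∂(Pr x) := by
  have e1 : ∀ ω : ℕ → 𝕏, Ψ ω * ∏ i : Fin (n+2), h i (ω (t + ↑i))
      = (Ψ ω * ∏ i : Fin (n+1), h i.castSucc (ω (t + ↑i))) *
          h (Fin.last (n+1)) (ω ((t+n) + 1)) := by
    intro ω
    rw [Fin.prod_univ_castSucc (fun i : Fin (n+2) => h i (ω (t + ↑i)))]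
    simp only [Fin.coe_castSucc, Fin.val_last]
    rw [mul_assoc, show t + (n+1) = t + n + 1 by omega]
  have hΨ' : Measurable[pathSigma 𝕏 (t+n)]
      fun ω : ℕ → 𝕏 => Ψ ω * ∏ i : Fin (n+1), h i.castSucc (ω (t + ↑i)) := by
    refine Measurable.mul hΨ ?_
    refine Finset.measurable_prod Finset.univ fun i _ => ?_
    exact (hh i.castSucc).comp (measurable_eval_pathSigma (by have := i.is_le; omega))
  calc ∫⁻ ω, Ψ ω * ∏ i : Fin (n+2), h i (ω (t + ↑i)) ∂(Pr x)
      = ∫⁻ ω, (Ψ ω * ∏ i : Fin (n+1), h i.castSucc (ω (t + ↑i))) *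
          h (Fin.last (n+1)) (ω ((t+n) + 1)) ∂(Pr x) := lintegral_congr e1
    _ = ∫⁻ ω, (Ψ ω * ∏ i : Fin (n+1), h i.castSucc (ω (t + ↑i))) *
          ∫⁻ z, h (Fin.last (n+1)) z ∂(Q (ω (t+n))) ∂(Pr x) :=
        markov_fun_mul hchain (t+n) hΨ' (hh _) x
    _ = ∫⁻ ω, Ψ ω * ∏ i : Fin (n+1), succFn Q n h i (ω (t + ↑i)) ∂(Pr x) := by
        refine lintegral_congr fun ω => ?_
        rw [prod_succFn (fun i : Fin (n+1) => ω (t + ↑i))]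
        simp only [Fin.val_last]
        rw [mul_assoc]

variable [MeasurableSingletonClass 𝕏]

lemma lintegral_eval_zero (hchain : IsMarkovChainLaw Pr Q) (y : 𝕏) {φ : 𝕏 → ℝ≥0∞} :
    ∫⁻ ω, φ (ω 0) ∂(Pr y) = φ y := by
  have hset : MeasurableSet {ω : ℕ → 𝕏 | ω 0 = y} := by
    have : {ω : ℕ → 𝕏 | ω 0 = y} = (fun ω : ℕ → 𝕏 => ω 0) ⁻¹' {y} := by
      ext ω; simp
    rw [this]
    exact measurable_pi_apply 0 (measurableSet_singleton y)
  have hae : ∀ᵐ ω ∂(Pr y), ω 0 = y := by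
    rw [ae_iff]
    have : {ω : ℕ → 𝕏 | ¬ ω 0 = y} = {ω : ℕ → 𝕏 | ω 0 = y}ᶜ := rfl
    rw [this, measure_compl hset (measure_ne_top _ _), hchain.start y, measure_univ]
    simp
  calc ∫⁻ ω, φ (ω 0) ∂(Pr y) = ∫⁻ _, φ y ∂(Pr y) :=
        lintegral_congr_ae (hae.mono fun ω h => by simp only []; rw [h])
    _ = φ y := by rw [lintegral_const, measure_univ, mul_one]

lemma finMarkov (hchain : IsMarkovChainLaw Pr Q) : ∀ (n t : ℕ) (Ψ : (ℕ → 𝕏) → ℝ≥0∞),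
    Measurable[pathSigma 𝕏 t] Ψ → ∀ (h : Fin (n+1) → 𝕏 → ℝ≥0∞), (∀ i, Measurable (h i)) →
    ∀ x : 𝕏, ∫⁻ ω, Ψ ω * ∏ i : Fin (n+1), h i (ω (t + ↑i)) ∂(Pr x)
      = ∫⁻ ω, Ψ ω * ∫⁻ ω', ∏ i : Fin (n+1), h i (ω' ↑i) ∂(Pr (ω t)) ∂(Pr x) := by
  intro n
  induction n with
  | zero =>
    intro t Ψ hΨ h hh x
    have e1 : ∀ ω : ℕ → 𝕏, ∏ i : Fin 1, h i (ω (t + ↑i)) = h 0 (ω t) := by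
      intro ω; rw [Fin.prod_univ_one]; norm_num
    have e2 : ∀ ω' : ℕ → 𝕏, ∏ i : Fin 1, h i (ω' ↑i) = h 0 (ω' 0) := by
      intro ω'; rw [Fin.prod_univ_one]; norm_num
    simp only [e1, e2]
    refine lintegral_congr fun ω => ?_
    rw [lintegral_eval_zero hchain (ω t)]
  | succ n IH =>
    intro t Ψ hΨ h hh x
    rw [finMarkov_step hchain n t (hΨ.mono (pathSigma_mono (Nat.le_add_right t n)) le_rfl) h hh x,
      IH t Ψ hΨ (succFn Q n h) (measurable_succFn hh) x]
    refine lintegral_congr fun ω => ?_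
    congr 1
    have hstep := finMarkov_step hchain n 0
      (Ψ := fun _ : ℕ → 𝕏 => (1:ℝ≥0∞)) (@measurable_const _ _ _ (pathSigma 𝕏 (0+n)) _) h hh (ω t)
    simp only [one_mul, zero_add] at hstep
    rw [hstep]

lemma shiftMarkov (hchain : IsMarkovChainLaw Pr Q) (t : ℕ) {B : Set (ℕ → 𝕏)}
    (hB : MeasurableSet[pathSigma 𝕏 t] B) {g : (ℕ → 𝕏) → ℝ≥0∞} (hg : Measurable g) (x : 𝕏) :
    ∫⁻ ω in B, g (fun s => ω (t + s)) ∂(Pr x)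
      = ∫⁻ ω in B, ∫⁻ ω', g ω' ∂(Pr (ω t)) ∂(Pr x) := by
  have hB' : MeasurableSet B := pathSigma_le t _ hB
  have hshift : Measurable (fun ω : ℕ → 𝕏 => (fun s => ω (t + s))) :=
    measurable_pi_lambda _ fun s => measurable_pi_apply (t + s)
  have hPrm : Measurable fun ω : ℕ → 𝕏 => Pr (ω t) := Pr.measurable.comp (measurable_pi_apply t)
  have hμν : ((Pr x).restrict B).map (fun ω : ℕ → 𝕏 => fun s => ω (t + s))
      = ((Pr x).restrict B).bind (fun ω => Pr (ω t)) := by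
    haveI : IsFiniteMeasure (((Pr x).restrict B).map (fun ω : ℕ → 𝕏 => fun s => ω (t + s))) := by
      constructor
      rw [Measure.map_apply hshift MeasurableSet.univ]
      exact measure_lt_top _ _
    refine ext_of_generate_finite (squareCylinders fun _ : ℕ => {s : Set 𝕏 | MeasurableSet s})
      generateFrom_squareCylinders.symm
      (isPiSystem_squareCylinders (fun i u hu v hv _ => hu.inter hv)
        (fun i => MeasurableSet.univ)) ?_ ?_
    · rintro s ⟨J, A, hA, rfl⟩
      have hA' : ∀ i, MeasurableSet (A i) := fun i => hA i (mem_univ i)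
      set N := J.sup id with hN
      have hJN : ∀ j ∈ J, j < N + 1 := fun j hj => Nat.lt_succ_of_le (Finset.le_sup (f := id) hj)
      set h : Fin (N+1) → 𝕏 → ℝ≥0∞ :=
        fun i y => if (i : ℕ) ∈ J then (A i).indicator (fun _ => 1) y else 1 with hh_def
      have hh : ∀ i, Measurable (h i) := by
        intro i
        by_cases hi : (i:ℕ) ∈ J
        · simp only [hh_def, if_pos hi]; exact measurable_const.indicator (hA' i)
        · simp only [hh_def, if_neg hi]; exact measurable_const
      have hind : ∀ ω : ℕ → 𝕏, ((J : Set ℕ).pi A).indicator (fun _ => (1:ℝ≥0∞)) ω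
          = ∏ i : Fin (N+1), h i (ω ↑i) := by
        intro ω
        by_cases hω : ω ∈ (J : Set ℕ).pi A
        · rw [indicator_of_mem hω]
          symm
          refine Finset.prod_eq_one fun i _ => ?_
          by_cases hi : (i:ℕ) ∈ J
          · simp only [hh_def, if_pos hi]
            rw [indicator_of_mem (hω _ (Finset.mem_coe.mpr hi))]
          · simp [hh_def, hi]
        · rw [indicator_of_notMem hω]
          symm
          have hω' : ∃ j ∈ J, ω j ∉ A j := by
            by_contra hcon
            push_neg at hcon
            exact hω fun j hj => hcon j (Finset.mem_coe.mp hj)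
          obtain ⟨j, hjJ, hjA⟩ := hω'
          refine Finset.prod_eq_zero (Finset.mem_univ (⟨j, hJN j hjJ⟩ : Fin (N+1))) ?_
          simp only [hh_def, if_pos hjJ]
          rw [indicator_of_notMem hjA]
      have hmeas_pi : MeasurableSet ((J : Set ℕ).pi A) :=
        MeasurableSet.pi (J.countable_toSet) (fun i _ => hA' i)
      have hkey := finMarkov hchain N t (B.indicator (fun _ => (1:ℝ≥0∞)))
        ((@measurable_const ℝ≥0∞ _ _ (pathSigma 𝕏 t) 1).indicator hB) h hh x
      have hμ : (((Pr x).restrict B).map (fun ω : ℕ → 𝕏 => fun s => ω (t + s)))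
            ((J : Set ℕ).pi A)
          = ∫⁻ ω, B.indicator (fun _ => (1:ℝ≥0∞)) ω *
              ∏ i : Fin (N+1), h i (ω (t + ↑i)) ∂(Pr x) := by
        rw [Measure.map_apply hshift hmeas_pi, Measure.restrict_apply (hshift hmeas_pi)]
        rw [← one_mul ((Pr x) _), ← lintegral_indicator_const ((hshift hmeas_pi).inter hB') 1]
        refine lintegral_congr fun ω => ?_
        have hval : ∀ w : ℕ → 𝕏, (∏ i : Fin (N+1), h i (w ↑i))
            = ((J : Set ℕ).pi A).indicator (fun _ => (1:ℝ≥0∞)) w := fun w => (hind w).symm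
        by_cases h1 : ω ∈ B
        · by_cases h2 : (fun s => ω (t+s)) ∈ (J:Set ℕ).pi A
          · have : ω ∈ (fun ω : ℕ → 𝕏 => fun s => ω (t + s)) ⁻¹' ((J:Set ℕ).pi A) ∩ B :=
              ⟨h2, h1⟩
            rw [indicator_of_mem this, indicator_of_mem h1]
            have := hind (fun s => ω (t+s))
            rw [indicator_of_mem h2] at this
            simp only [← this, mul_one, one_mul]
          · have : ω ∉ (fun ω : ℕ → 𝕏 => fun s => ω (t + s)) ⁻¹' ((J:Set ℕ).pi A) ∩ B :=
              fun hc => h2 hc.1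
            rw [indicator_of_notMem this, indicator_of_mem h1]
            have := hind (fun s => ω (t+s))
            rw [indicator_of_notMem h2] at this
            simp only [← this, one_mul]
        · have : ω ∉ (fun ω : ℕ → 𝕏 => fun s => ω (t + s)) ⁻¹' ((J:Set ℕ).pi A) ∩ B :=
            fun hc => h1 hc.2
          rw [indicator_of_notMem this, indicator_of_notMem h1, zero_mul]
      have hν : (((Pr x).restrict B).bind (fun ω => Pr (ω t))) ((J : Set ℕ).pi A)
          = ∫⁻ ω, B.indicator (fun _ => (1:ℝ≥0∞)) ω *
              ∫⁻ ω', ∏ i : Fin (N+1), h i (ω' ↑i) ∂(Pr (ω t)) ∂(Pr x) := by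
        rw [Measure.bind_apply hmeas_pi hPrm.aemeasurable]
        have hPrpi : ∀ y : 𝕏, (Pr y) ((J:Set ℕ).pi A)
            = ∫⁻ ω', ∏ i : Fin (N+1), h i (ω' ↑i) ∂(Pr y) := by
          intro y
          rw [← one_mul ((Pr y) _), ← lintegral_indicator_const hmeas_pi 1]
          exact lintegral_congr fun ω' => hind ω'
        calc ∫⁻ ω, (Pr (ω t)) ((J:Set ℕ).pi A) ∂((Pr x).restrict B)
            = ∫⁻ ω, B.indicator (fun ω => (Pr (ω t)) ((J:Set ℕ).pi A)) ω ∂(Pr x) := by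
              rw [lintegral_indicator hB']
          _ = ∫⁻ ω, B.indicator (fun _ => (1:ℝ≥0∞)) ω *
              ∫⁻ ω', ∏ i : Fin (N+1), h i (ω' ↑i) ∂(Pr (ω t)) ∂(Pr x) := by
              refine lintegral_congr fun ω => ?_
              by_cases h1 : ω ∈ B
              · rw [indicator_of_mem h1, indicator_of_mem h1, hPrpi, one_mul]
              · rw [indicator_of_notMem h1, indicator_of_notMem h1, zero_mul]
      rw [hμ, hν, hkey]
    · rw [Measure.map_apply hshift MeasurableSet.univ,
        Measure.bind_apply MeasurableSet.univ hPrm.aemeasurable]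
      simp [measure_univ]
  calc ∫⁻ ω in B, g (fun s => ω (t + s)) ∂(Pr x)
      = ∫⁻ ω', g ω' ∂(((Pr x).restrict B).map (fun ω : ℕ → 𝕏 => fun s => ω (t + s))) :=
        (lintegral_map hg hshift).symm
    _ = ∫⁻ ω', g ω' ∂(((Pr x).restrict B).bind (fun ω => Pr (ω t))) := by rw [hμν]
    _ = ∫⁻ ω in B, ∫⁻ ω', g ω' ∂(Pr (ω t)) ∂(Pr x) := Measure.lintegral_bind hPrm.aemeasurable hg.aemeasurable

lemma lintegral_payoffL_mono (hchain : IsMarkovChainLaw Pr Q) {δ : ℕ → ℝ} {f : 𝕏 → ℝ} {C : ℝ}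
    (hδ1 : ∀ k, δ k ≤ 1) (hδ0 : ∀ k, 0 ≤ δ k) (hDI : ∀ i j, δ i * δ j ≤ δ (i + j))
    (hf_nonneg : ∀ y, 0 ≤ f y) (hfC : ∀ y, f y ≤ C) (hC : 0 ≤ C) (hf : Measurable f)
    {S Sstar : Set 𝕏} (hS : MeasurableSet S) (hSs : MeasurableSet Sstar) (hsub : Sstar ⊆ S)
    (hEq : ∀ y, y ∉ Sstar → f y ≤ valJ Pr δ f Sstar y) (x : 𝕏) :
    ∫⁻ ω, payoffL δ f S ω ∂(Pr x) ≤ ∫⁻ ω, payoffL δ f Sstar ω ∂(Pr x) := by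
  set E : ℕ → Set (ℕ → 𝕏) := fun t => {ω : ℕ → 𝕏 | hitTime S ω = (t : ℕ∞)} with hE
  have hEmeas : ∀ t, MeasurableSet (E t) := fun t => measurableSet_hitTime_eq' hS t
  have lhs_eq : ∫⁻ ω, payoffL δ f S ω ∂(Pr x)
      = ∑' t : ℕ, ∫⁻ ω in E t, ENNReal.ofReal (δ t * f (ω t)) ∂(Pr x) := by
    have hft : ∀ t : ℕ, Measurable fun ω' : ℕ → 𝕏 => f (ω' t) :=
      fun t => hf.comp (measurable_pi_apply t)
    simp only [payoffL]
    rw [lintegral_tsum fun t =>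
      (Measurable.indicator ((hft t).const_mul (δ t)).ennreal_ofReal (hEmeas t)).aemeasurable]
    exact tsum_congr fun t => lintegral_indicator (hEmeas t) _
  have per_t : ∀ t : ℕ, ∫⁻ ω in E t, ENNReal.ofReal (δ t * f (ω t)) ∂(Pr x)
      ≤ ∫⁻ ω in E t, payoffL δ f Sstar ω ∂(Pr x) := by
    intro t
    by_cases ht : 1 ≤ t
    case neg =>
      have hempty : E t = ∅ := by
        ext ω
        simp only [hE, hitTime_eq_coe_iff, mem_setOf_eq, mem_empty_iff_false, iff_false]
        intro hcon; exact ht hcon.1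
      rw [hempty]
      simp
    case pos =>
    set Ein : Set (ℕ → 𝕏) := E t ∩ {ω : ℕ → 𝕏 | ω t ∈ Sstar} with hEin
    set Eout : Set (ℕ → 𝕏) := E t ∩ {ω : ℕ → 𝕏 | ω t ∈ Sstarᶜ} with hEout
    have hmem_t : MeasurableSet {ω : ℕ → 𝕏 | ω t ∈ Sstar} := measurable_pi_apply t hSs
    have hin_meas : MeasurableSet Ein := (hEmeas t).inter hmem_t
    have hout_meas : MeasurableSet Eout := (hEmeas t).inter (measurable_pi_apply t hSs.compl)
    have hout_meas' : MeasurableSet[pathSigma 𝕏 t] Eout := by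
      refine @MeasurableSet.inter _ (pathSigma 𝕏 t) _ _ (measurableSet_hitTime_eq hS t) ?_
      exact measurable_eval_pathSigma le_rfl hSs.compl
    have hunion : E t = Ein ∪ Eout := by
      ext ω
      by_cases hω : ω t ∈ Sstar <;>
        simp [hEin, hEout, hω]
    have hdisj : Disjoint Ein Eout := by
      rw [Set.disjoint_left]
      rintro ω ⟨-, h1⟩ ⟨-, h2⟩
      exact h2 h1
    have hsplit : ∀ φ : (ℕ → 𝕏) → ℝ≥0∞,
        ∫⁻ ω in E t, φ ω ∂(Pr x) = ∫⁻ ω in Ein, φ ω ∂(Pr x) + ∫⁻ ω in Eout, φ ω ∂(Pr x) := by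
      intro φ
      rw [hunion, lintegral_union hout_meas hdisj]
    -- the in-part
    have hin : ∫⁻ ω in Ein, ENNReal.ofReal (δ t * f (ω t)) ∂(Pr x)
        = ∫⁻ ω in Ein, payoffL δ f Sstar ω ∂(Pr x) := by
      refine setLIntegral_congr_fun hin_meas (fun ω hω => ?_)
      obtain ⟨h1, h2⟩ := hω
      have hhit : hitTime Sstar ω = (t : ℕ∞) := by
        rw [hitTime_eq_coe_iff]
        have h1' := hitTime_eq_coe_iff.mp h1
        exact ⟨ht, h2, fun s h1s hst hmem => h1'.2.2 s h1s hst (hsub hmem)⟩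
      rw [payoffL_eq, stopPayoff, hhit]
      rw [if_neg (ENat.coe_ne_top t)]
      simp
    -- the out-part
    have hout : ∫⁻ ω in Eout, ENNReal.ofReal (δ t * f (ω t)) ∂(Pr x)
        ≤ ∫⁻ ω in Eout, payoffL δ f Sstar ω ∂(Pr x) := by
      have step1 : ∫⁻ ω in Eout, ENNReal.ofReal (δ t * f (ω t)) ∂(Pr x)
          ≤ ∫⁻ ω in Eout, ENNReal.ofReal (δ t) *
              ENNReal.ofReal (valJ Pr δ f Sstar (ω t)) ∂(Pr x) := by
        refine lintegral_mono_ae ((ae_restrict_iff' hout_meas).mpr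
          (Filter.Eventually.of_forall fun ω hω => ?_))
        rw [ENNReal.ofReal_mul (hδ0 t)]
        exact mul_le_mul_right (ENNReal.ofReal_le_ofReal (hEq (ω t) hω.2)) _
      have step2 : ∫⁻ ω in Eout, ENNReal.ofReal (δ t) *
              ENNReal.ofReal (valJ Pr δ f Sstar (ω t)) ∂(Pr x)
          = ENNReal.ofReal (δ t) *
              ∫⁻ ω in Eout, ∫⁻ ω', payoffL δ f Sstar ω' ∂(Pr (ω t)) ∂(Pr x) := by
        rw [← lintegral_const_mul' _ _ ENNReal.ofReal_ne_top]
        refine lintegral_congr fun ω => ?_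
        rw [ofReal_valJ hδ1 hδ0 hf_nonneg hfC hC hf hSs (ω t)]
      have step3 : ∫⁻ ω in Eout, ∫⁻ ω', payoffL δ f Sstar ω' ∂(Pr (ω t)) ∂(Pr x)
          = ∫⁻ ω in Eout, payoffL δ f Sstar (fun s => ω (t + s)) ∂(Pr x) :=
        (shiftMarkov hchain t hout_meas' (measurable_payoffL hf hSs) x).symm
      have step4 : ENNReal.ofReal (δ t) *
            ∫⁻ ω in Eout, payoffL δ f Sstar (fun s => ω (t + s)) ∂(Pr x)
          ≤ ∫⁻ ω in Eout, payoffL δ f Sstar ω ∂(Pr x) := by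
        rw [← lintegral_const_mul' _ _ ENNReal.ofReal_ne_top]
        refine lintegral_mono_ae ((ae_restrict_iff' hout_meas).mpr
          (Filter.Eventually.of_forall fun ω hω => ?_))
        obtain ⟨h1, h2⟩ := hω
        have h1' := hitTime_eq_coe_iff.mp h1
        have hno : ∀ s : ℕ, 1 ≤ s → s ≤ t → ω s ∉ Sstar := by
          intro s h1s h2s
          rcases lt_or_eq_of_le h2s with hlt | heq
          · exact fun hmem => h1'.2.2 s h1s hlt (hsub hmem)
          · subst heq; exact h2
        have hsh := hitTime_shift (S := Sstar) ht hno
        rcases eq_top_or_lt_top (hitTime Sstar (fun s => ω (t + s))) with htop | hlt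
        · rw [payoffL_eq δ f Sstar (fun s => ω (t + s)), stopPayoff, if_pos htop]
          simp
        · obtain ⟨u, hu⟩ : ∃ u : ℕ, hitTime Sstar (fun s => ω (t + s)) = (u : ℕ∞) :=
            ⟨(hitTime Sstar (fun s => ω (t + s))).toNat, (ENat.coe_toNat hlt.ne).symm⟩
          have hhit : hitTime Sstar ω = ((t + u : ℕ) : ℕ∞) := by
            rw [hsh, hu]; push_cast; ring
          rw [payoffL_eq δ f Sstar (fun s => ω (t + s)), payoffL_eq δ f Sstar ω,
            stopPayoff, stopPayoff, hu, hhit]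
          rw [if_neg (ENat.coe_ne_top u), if_neg (ENat.coe_ne_top (t+u))]
          simp only [ENat.toNat_coe]
          rw [← ENNReal.ofReal_mul (hδ0 t)]
          refine ENNReal.ofReal_le_ofReal ?_
          calc δ t * (δ u * f ((fun s => ω (t + s)) u)) = (δ t * δ u) * f (ω (t + u)) := by
                ring
            _ ≤ δ (t + u) * f (ω (t + u)) :=
                mul_le_mul_of_nonneg_right (hDI t u) (hf_nonneg _)
      calc ∫⁻ ω in Eout, ENNReal.ofReal (δ t * f (ω t)) ∂(Pr x)
          ≤ ENNReal.ofReal (δ t) *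
              ∫⁻ ω in Eout, ∫⁻ ω', payoffL δ f Sstar ω' ∂(Pr (ω t)) ∂(Pr x) :=
            le_trans step1 (le_of_eq step2)
        _ = ENNReal.ofReal (δ t) *
              ∫⁻ ω in Eout, payoffL δ f Sstar (fun s => ω (t + s)) ∂(Pr x) := by rw [step3]
        _ ≤ ∫⁻ ω in Eout, payoffL δ f Sstar ω ∂(Pr x) := step4
    calc ∫⁻ ω in E t, ENNReal.ofReal (δ t * f (ω t)) ∂(Pr x)
        = ∫⁻ ω in Ein, ENNReal.ofReal (δ t * f (ω t)) ∂(Pr x)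
            + ∫⁻ ω in Eout, ENNReal.ofReal (δ t * f (ω t)) ∂(Pr x) := hsplit _
      _ ≤ ∫⁻ ω in Ein, payoffL δ f Sstar ω ∂(Pr x)
            + ∫⁻ ω in Eout, payoffL δ f Sstar ω ∂(Pr x) := add_le_add (le_of_eq hin) hout
      _ = ∫⁻ ω in E t, payoffL δ f Sstar ω ∂(Pr x) := (hsplit _).symm
  have hpair : Pairwise (Function.onFun Disjoint E) := by
    intro i j hij
    rw [Function.onFun, Set.disjoint_left]
    intro ω h1 h2
    exact hij (by exact_mod_cast (h1 : hitTime S ω = _).symm.trans h2)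
  calc ∫⁻ ω, payoffL δ f S ω ∂(Pr x)
      = ∑' t : ℕ, ∫⁻ ω in E t, ENNReal.ofReal (δ t * f (ω t)) ∂(Pr x) := lhs_eq
    _ ≤ ∑' t : ℕ, ∫⁻ ω in E t, payoffL δ f Sstar ω ∂(Pr x) := ENNReal.tsum_le_tsum per_t
    _ = ∫⁻ ω in ⋃ t, E t, payoffL δ f Sstar ω ∂(Pr x) :=
        (lintegral_iUnion hEmeas hpair _).symm
    _ ≤ ∫⁻ ω, payoffL δ f Sstar ω ∂(Pr x) := lintegral_mono' Measure.restrict_le_self le_rfl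

end AuxMarkov

/-- Under decreasing impatience, if `S* = ⋂_{S ∈ ℰ} S` is an equilibrium,
then it is optimal. -/
theorem intersection_equilibrium_optimal
    {𝕏 : Type*} [TopologicalSpace 𝕏] [PolishSpace 𝕏] [MeasurableSpace 𝕏] [BorelSpace 𝕏]
    (Pr : Kernel 𝕏 (ℕ → 𝕏)) [IsMarkovKernel Pr] (Q : Kernel 𝕏 𝕏) [IsMarkovKernel Q]
    (hchain : IsMarkovChainLaw Pr Q)
    (f : 𝕏 → ℝ) (hf_meas : Measurable f) (hf_nonneg : ∀ x, 0 ≤ f x)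
    (hf_bdd : ∃ C : ℝ, ∀ x, f x ≤ C)
    (δ : ℕ → ℝ) (hδ_mem : ∀ k, δ k ∈ Set.Icc (0 : ℝ) 1) (hδ_anti : StrictAnti δ)
    (hδ_zero : δ 0 = 1) (hδ_lim : Tendsto δ atTop (𝓝 0))
    (hDI : ∀ i j : ℕ, δ i * δ j ≤ δ (i + j))
    (hstar : IsEquilibrium Pr δ f (⋂₀ {S : Set 𝕏 | IsEquilibrium Pr δ f S})) :
    ∀ S : Set 𝕏, IsEquilibrium Pr δ f S → ∀ x : 𝕏,
      valV Pr δ f S x ≤ valV Pr δ f (⋂₀ {S : Set 𝕏 | IsEquilibrium Pr δ f S}) x := by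
  intro S hS x
  obtain ⟨C, hfC⟩ := hf_bdd
  set Sstar := ⋂₀ {S : Set 𝕏 | IsEquilibrium Pr δ f S} with hSstar
  have hδ0 : ∀ k, 0 ≤ δ k := fun k => (hδ_mem k).1
  have hδ1 : ∀ k, δ k ≤ 1 := fun k => (hδ_mem k).2
  have hC' : ∀ y, f y ≤ max C 0 := fun y => le_trans (hfC y) (le_max_left _ _)
  have hC0 : (0:ℝ) ≤ max C 0 := le_max_right _ _
  have hsub : Sstar ⊆ S := Set.sInter_subset_of_mem hS
  have hEq : ∀ y, y ∉ Sstar → f y ≤ valJ Pr δ f Sstar y := by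
    intro y hy
    have : y ∉ Θ Pr δ f Sstar := by rw [hstar.2]; exact hy
    have : ¬ (valJ Pr δ f Sstar y ≤ f y) := this
    linarith [not_le.mp this]
  have hkey := lintegral_payoffL_mono hchain hδ1 hδ0 hDI hf_nonneg hC' hC0 hf_meas
    hS.1 hstar.1 hsub hEq x
  have hJ : valJ Pr δ f S x ≤ valJ Pr δ f Sstar x := by
    rw [valJ_eq_toReal hδ0 hf_nonneg hf_meas hS.1 x,
      valJ_eq_toReal hδ0 hf_nonneg hf_meas hstar.1 x]
    refine ENNReal.toReal_mono ?_ hkey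
    exact ne_top_of_le_ne_top ENNReal.ofReal_ne_top
      (lintegral_payoffL_le hδ1 hδ0 hf_nonneg hC' hC0 Sstar _)
  exact max_le_max le_rfl hJ

end
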